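/- For every positive real c and sufficiently large n, the size-Ramsey number R̂(C_{≤cn}, P_n) satisfies R̂(C_{≤cn}, P_n) ≥ 2.00365·n. -/

import Mathlib

open SimpleGraph Finset Real

/-- There is a blue path on `n` vertices (all edges coloured `false` = blue). -/
def hasBluePath {V : Type*} (G : SimpleGraph V) (red : Sym2 V → Bool) (n : ℕ) : Prop :=
  ∃ (u v : V) (p : G.Walk u v), p.IsPath ∧ p.length + 1 = n ∧ ∀ e ∈ p.edges, red e = false

/-- There is a red cycle of length at most `L`. -/
def hasRedCycleLe {V : Type*} (G : SimpleGraph V) (red : Sym2 V → Bool) (L : ℝ) : Prop :=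
  ∃ (u : V) (p : G.Walk u u), p.IsCycle ∧ (p.length : ℝ) ≤ L ∧ ∀ e ∈ p.edges, red e = true

namespace SR18

variable {V : Type} [DecidableEq V]

set_option linter.unusedSectionVars false

/-- A vertex of an edge of a walk lies on the support. -/
lemma mem_support_of_mem_edges {G : SimpleGraph V} {u v w : V} (q : G.Walk u v) {e : Sym2 V}
    (he : e ∈ q.edges) (hw : w ∈ e) : w ∈ q.support := by
  induction e with
  | _ x y =>
    rcases Sym2.mem_iff.1 hw with rfl | rfl
    · exact q.fst_mem_support_of_mem_edges he
    · exact q.snd_mem_support_of_mem_edges he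

/-- Every support vertex of a walk with an edge is incident to an edge of the walk. -/
lemma exists_incident_edge {G : SimpleGraph V} :
    ∀ {u v : V} (q : G.Walk u v), q.length ≠ 0 → ∀ w ∈ q.support, ∃ e ∈ q.edges, w ∈ e := by
  intro u v q
  induction q with
  | nil => intro h; simp at h
  | @cons a b c hadj q ih =>
    intro _ w hw
    rw [SimpleGraph.Walk.support_cons, List.mem_cons] at hw
    rcases hw with rfl | hw
    · exact ⟨s(w, b), by simp [SimpleGraph.Walk.edges_cons], by simp⟩
    · by_cases hq : q.length = 0
      · have hsl : q.support.tail.length = 0 := by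
          have h2 : q.support.length = q.length + 1 := q.length_support
          have h3 := q.support_eq_cons
          rw [h3] at h2
          simp only [List.length_cons] at h2
          omega
        have hsup : q.support = [b] := by
          rw [q.support_eq_cons, List.length_eq_zero_iff.1 hsl]
        rw [hsup] at hw
        simp only [List.mem_singleton] at hw
        subst hw
        exact ⟨s(a, w), by simp [SimpleGraph.Walk.edges_cons], by simp⟩
      · obtain ⟨e, he, hwe⟩ := ih hq w hw
        exact ⟨e, by simp [SimpleGraph.Walk.edges_cons, he], hwe⟩

/-- A path uses at most one edge at its starting vertex. -/
lemma path_start_degree {G : SimpleGraph V} :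
    ∀ {u v : V} (q : G.Walk u v), q.IsPath →
      (q.edges.filter (fun e => u ∈ e)).length ≤ 1 := by
  intro u v q
  induction q with
  | nil => simp
  | @cons a b c hadj q ih =>
    intro hp
    rw [SimpleGraph.Walk.edges_cons]
    have ha : a ∉ q.support := ((SimpleGraph.Walk.cons_isPath_iff _ _).1 hp).2
    have hnil : q.edges.filter (fun e => a ∈ e) = [] := by
      rw [List.filter_eq_nil_iff]
      intro e he
      simp only [decide_eq_true_eq]
      exact fun hae => ha (mem_support_of_mem_edges q he hae)
    rw [List.filter_cons_of_pos (by simp), hnil]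
    simp

/-- A path uses at most two edges at any vertex. -/
lemma path_degree_le_two {G : SimpleGraph V} :
    ∀ {u v : V} (q : G.Walk u v), q.IsPath → ∀ w : V,
      (q.edges.filter (fun e => w ∈ e)).length ≤ 2 := by
  intro u v q
  induction q with
  | nil => simp
  | @cons a b c hadj q ih =>
    intro hp w
    have hq : q.IsPath := hp.of_cons
    have ha : a ∉ q.support := ((SimpleGraph.Walk.cons_isPath_iff _ _).1 hp).2
    rw [SimpleGraph.Walk.edges_cons]
    by_cases hwa : w = a
    · subst hwa
      have hnil : q.edges.filter (fun e => w ∈ e) = [] := by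
        rw [List.filter_eq_nil_iff]
        intro e he
        simp only [decide_eq_true_eq]
        exact fun hae => ha (mem_support_of_mem_edges q he hae)
      rw [List.filter_cons_of_pos (by simp), hnil]
      simp
    · by_cases hwb : w = b
      · subst hwb
        have h1 := path_start_degree q hq
        rw [List.filter_cons_of_pos (by simp)]
        simpa using Nat.succ_le_succ h1
      · rw [List.filter_cons_of_neg (by simp [Sym2.mem_iff, hwa, hwb])]
        exact ih hq w

/-- Any vertex on a cycle has two distinct neighbours. -/
lemma cycle_two_neighbors {F : SimpleGraph V} {u : V} (c : F.Walk u u) (hc : c.IsCycle)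
    {w : V} (hw : w ∈ c.support) :
    ∃ y z : V, y ≠ z ∧ F.Adj w y ∧ F.Adj w z := by
  have hc' : (c.rotate w hw).IsCycle := hc.rotate hw
  set c' := c.rotate w hw with hcdef
  clear_value c'
  clear hcdef hc hw c
  cases c' with
  | nil => exact absurd rfl hc'.ne_nil
  | @cons _ y _ hadj q =>
    have hyw : y ≠ w := fun h => by subst h; exact F.irrefl hadj
    obtain ⟨z, hz, q2, hq2⟩ := SimpleGraph.Walk.exists_eq_cons_of_ne (Ne.symm hyw) q.reverse
    refine ⟨y, z, ?_, hadj, hz⟩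
    rintro rfl
    have hnodup := hc'.isCircuit.isTrail.edges_nodup
    rw [SimpleGraph.Walk.edges_cons] at hnodup
    have hmem : s(w, y) ∈ q.edges := by
      have h5 : s(w, y) ∈ q.reverse.edges := by
        rw [hq2, SimpleGraph.Walk.edges_cons]
        exact List.mem_cons_self
      rw [SimpleGraph.Walk.edges_reverse] at h5
      exact List.mem_reverse.1 h5
    exact (List.nodup_cons.1 hnodup).1 hmem

/-- A closed walk that is not nil decomposes as a cons. -/
lemma walk_cons_of_ne_nil {G : SimpleGraph V} {u : V} (p : G.Walk u u)
    (h : p ≠ SimpleGraph.Walk.nil) :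
    ∃ (b : V) (hadj : G.Adj u b) (q : G.Walk b u), p = SimpleGraph.Walk.cons hadj q := by
  cases p with
  | nil => exact absurd rfl h
  | cons hadj q => exact ⟨_, hadj, q, rfl⟩

/-- Reachability after inserting one edge. -/
lemma reach_insert {x y : V} (s : Finset (Sym2 V)) {u v : V}
    (h : (fromEdgeSet (↑(insert s(x,y) s) : Set (Sym2 V))).Reachable u v) :
    (fromEdgeSet (↑s : Set (Sym2 V))).Reachable u v ∨
    ((fromEdgeSet (↑s : Set (Sym2 V))).Reachable u x ∧
      (fromEdgeSet (↑s : Set (Sym2 V))).Reachable y v) ∨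
    ((fromEdgeSet (↑s : Set (Sym2 V))).Reachable u y ∧
      (fromEdgeSet (↑s : Set (Sym2 V))).Reachable x v) := by
  obtain ⟨p⟩ := h
  induction p with
  | nil => exact Or.inl (SimpleGraph.Reachable.refl _)
  | @cons a b c hadj p ih =>
    have hmem := (SimpleGraph.fromEdgeSet_adj _).1 hadj
    have hne : a ≠ b := hmem.2
    have hmem' : s(a,b) ∈ insert s(x,y) s := by exact_mod_cast hmem.1
    rcases Finset.mem_insert.1 hmem' with heq | hs
    · rcases Sym2.eq_iff.1 heq with ⟨rfl, rfl⟩ | ⟨rfl, rfl⟩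
      · rcases ih with h1 | ⟨h1, h2⟩ | ⟨h1, h2⟩
        · exact Or.inr (Or.inl ⟨SimpleGraph.Reachable.refl _, h1⟩)
        · exact Or.inr (Or.inl ⟨SimpleGraph.Reachable.refl _, h2⟩)
        · exact Or.inl h2
      · rcases ih with h1 | ⟨h1, h2⟩ | ⟨h1, h2⟩
        · exact Or.inr (Or.inr ⟨SimpleGraph.Reachable.refl _, h1⟩)
        · exact Or.inl h2
        · exact Or.inr (Or.inr ⟨SimpleGraph.Reachable.refl _, h2⟩)
    · have hadj1 : (fromEdgeSet (↑s : Set (Sym2 V))).Adj a b :=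
        (SimpleGraph.fromEdgeSet_adj _).2 ⟨by exact_mod_cast hs, hne⟩
      rcases ih with h1 | ⟨h1, h2⟩ | ⟨h1, h2⟩
      · exact Or.inl (hadj1.reachable.trans h1)
      · exact Or.inr (Or.inl ⟨hadj1.reachable.trans h1, h2⟩)
      · exact Or.inr (Or.inr ⟨hadj1.reachable.trans h1, h2⟩)

/-- Any graph on a finite vertex set with `s.card` edges admits an independent transversal `t`
with `|V| ≤ |s| + |t|`. -/
lemma comps_count [Fintype V] (s : Finset (Sym2 V)) :
    ∃ t : Finset V,
      (∀ v : V, ∃ w ∈ t, (fromEdgeSet (↑s : Set (Sym2 V))).Reachable v w) ∧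
      (∀ w ∈ t, ∀ w' ∈ t, w ≠ w' →
        ¬ (fromEdgeSet (↑s : Set (Sym2 V))).Reachable w w') ∧
      Fintype.card V ≤ s.card + t.card := by
  classical
  induction s using Finset.induction_on with
  | empty =>
    refine ⟨Finset.univ, fun v => ⟨v, Finset.mem_univ v, SimpleGraph.Reachable.refl v⟩,
      fun w _ w' _ hne hr => ?_, by simp⟩
    rw [show ((↑(∅ : Finset (Sym2 V)) : Set (Sym2 V))) = ∅ from Finset.coe_empty,
      SimpleGraph.fromEdgeSet_empty] at hr
    exact hne (SimpleGraph.reachable_bot.1 hr)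
  | @insert e s he ih =>
    obtain ⟨t, hcov, hind, hcard⟩ := ih
    induction e with
    | _ x y =>
      by_cases hxy : x = y
      · subst hxy
        have hGeq : fromEdgeSet (↑(insert s(x,x) s) : Set (Sym2 V))
            = fromEdgeSet (↑s : Set (Sym2 V)) := by
          ext a b
          simp only [SimpleGraph.fromEdgeSet_adj, Finset.coe_insert, Set.mem_insert_iff,
            Finset.mem_coe]
          constructor
          · rintro ⟨h1 | h1, h2⟩
            · rcases Sym2.eq_iff.1 h1 with ⟨rfl, rfl⟩ | ⟨rfl, rfl⟩ <;> exact absurd rfl h2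
            · exact ⟨h1, h2⟩
          · rintro ⟨h1, h2⟩; exact ⟨Or.inr h1, h2⟩
        refine ⟨t, ?_, ?_, ?_⟩
        · intro v; rw [hGeq]; exact hcov v
        · intro w hw w' hw' hne; rw [hGeq]; exact hind w hw w' hw' hne
        · rw [Finset.card_insert_of_notMem he]; omega
      · obtain ⟨wx, hwx, hrx⟩ := hcov x
        obtain ⟨wy, hwy, hry⟩ := hcov y
        by_cases hww : wx = wy
        · refine ⟨t, ?_, ?_, ?_⟩
          · intro v
            obtain ⟨w, hw, hr⟩ := hcov v
            exact ⟨w, hw, hr.mono (SimpleGraph.fromEdgeSet_mono (by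
              rw [Finset.coe_insert]; exact Set.subset_insert _ _))⟩
          · intro w hw w' hw' hne hr
            rcases reach_insert s hr with h1 | ⟨h1, h2⟩ | ⟨h1, h2⟩
            · exact hind w hw w' hw' hne h1
            · have hwwx : w = wx := by
                by_contra hne2
                exact hind w hw wx hwx hne2 (h1.trans hrx)
              have hw'wy : w' = wy := by
                by_contra hne2
                exact hind wy hwy w' hw' (fun hh => hne2 hh.symm) (hry.symm.trans h2)
              exact hne (by rw [hwwx, hw'wy, hww])
            · have hwwy : w = wy := by
                by_contra hne2
                exact hind w hw wy hwy hne2 (h1.trans hry)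
              have hw'wx : w' = wx := by
                by_contra hne2
                exact hind wx hwx w' hw' (fun hh => hne2 hh.symm) (hrx.symm.trans h2)
              exact hne (by rw [hwwy, hw'wx, hww])
          · rw [Finset.card_insert_of_notMem he]; omega
        · have hadjxy : (fromEdgeSet (↑(insert s(x,y) s) : Set (Sym2 V))).Adj x y := by
            rw [SimpleGraph.fromEdgeSet_adj]
            exact ⟨by rw [Finset.coe_insert]; exact Set.mem_insert _ _, hxy⟩
          have hmono : fromEdgeSet (↑s : Set (Sym2 V)) ≤
              fromEdgeSet (↑(insert s(x,y) s) : Set (Sym2 V)) :=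
            SimpleGraph.fromEdgeSet_mono (by rw [Finset.coe_insert]; exact Set.subset_insert _ _)
          refine ⟨t.erase wy, ?_, ?_, ?_⟩
          · intro v
            obtain ⟨w, hw, hr⟩ := hcov v
            by_cases hwwy : w = wy
            · subst hwwy
              refine ⟨wx, Finset.mem_erase.2 ⟨fun hh => hww hh, hwx⟩, ?_⟩
              exact ((hr.mono hmono).trans ((hry.symm.mono hmono).trans
                ((hadjxy.symm.reachable).trans (hrx.mono hmono))))
            · exact ⟨w, Finset.mem_erase.2 ⟨hwwy, hw⟩, hr.mono hmono⟩
          · intro w hw w' hw' hne hr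
            have hw1 := (Finset.mem_erase.1 hw)
            have hw'1 := (Finset.mem_erase.1 hw')
            rcases reach_insert s hr with h1 | ⟨h1, h2⟩ | ⟨h1, h2⟩
            · exact hind w hw1.2 w' hw'1.2 hne h1
            · have hcon : w' = wy := by
                by_contra hne2
                exact hind wy hwy w' hw'1.2 (fun hh => hne2 hh.symm) (hry.symm.trans h2)
              exact hw'1.1 hcon
            · have hcon : w = wy := by
                by_contra hne2
                exact hind w hw1.2 wy hwy hne2 (h1.trans hry)
              exact hw1.1 hcon
          · rw [Finset.card_insert_of_notMem he]
            have h1 : t.card ≤ (t.erase wy).card + 1 := by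
              have := Finset.card_erase_add_one hwy
              omega
            omega

/-- The "segments" lemma. -/
lemma seg {α : Type} [DecidableEq α] {G : SimpleGraph V} (f : V → α) (Bs : Finset V)
    (hf : ∀ ⦃a b : V⦄, G.Adj a b → a ∉ Bs → b ∉ Bs → f a = f b) :
    ∀ {u v : V} (q : G.Walk u v),
      (((q.support.filter (fun w => w ∉ Bs)).toFinset).image f).card
        ≤ (q.support.filter (fun w => w ∈ Bs)).length + (if u ∈ Bs then 0 else 1) := by
  intro u v q
  induction q with
  | @nil w =>
    by_cases hu : w ∈ Bs
    · rw [SimpleGraph.Walk.support_nil,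
        List.filter_cons_of_neg (by simpa using hu),
        List.filter_cons_of_pos (by simpa using hu), if_pos hu]
      simp
    · rw [SimpleGraph.Walk.support_nil,
        List.filter_cons_of_pos (by simpa using hu),
        List.filter_cons_of_neg (by simpa using hu), if_neg hu]
      simp
  | @cons a b c hadj q ih =>
    rw [SimpleGraph.Walk.support_cons]
    by_cases ha : a ∈ Bs
    · rw [List.filter_cons_of_neg (by simpa using ha),
        List.filter_cons_of_pos (by simpa using ha), if_pos ha, List.length_cons]
      refine le_trans ih ?_
      split <;> omega
    · rw [List.filter_cons_of_pos (by simpa using ha),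
        List.filter_cons_of_neg (by simpa using ha), if_neg ha,
        List.toFinset_cons, Finset.image_insert]
      by_cases hb : b ∈ Bs
      · rw [if_pos hb] at ih
        refine le_trans (Finset.card_insert_le _ _) ?_
        omega
      · rw [if_neg hb] at ih
        have hfab : f a = f b := hf hadj ha hb
        have hbmem : f b ∈ ((q.support.filter (fun w => w ∉ Bs)).toFinset).image f := by
          refine Finset.mem_image_of_mem f ?_
          rw [List.mem_toFinset, List.mem_filter]
          exact ⟨q.start_mem_support, by simpa using hb⟩
        rw [hfab, Finset.insert_eq_self.2 hbmem]
        exact ih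

/-- A non-diagonal pair has exactly two elements. -/
lemma sym2_card_two [Fintype V] {e : Sym2 V} (he : ¬ e.IsDiag) :
    (Finset.univ.filter (fun v => v ∈ e)).card = 2 := by
  induction e with
  | _ x y =>
    have hxy : x ≠ y := by simpa using he
    have hfil : Finset.univ.filter (fun v => v ∈ s(x,y)) = {x, y} := by
      ext v
      simp [Sym2.mem_iff]
    rw [hfil]
    exact Finset.card_pair hxy

end SR18

theorem stmt18 (c : ℝ) (hc : 0 < c) :
    ∃ n₀ : ℕ, ∀ n : ℕ, n₀ ≤ n →
      ∀ (V : Type) [Fintype V] [DecidableEq V] (G : SimpleGraph V) [DecidableRel G.Adj],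
        (∀ red : Sym2 V → Bool, hasRedCycleLe G red (c * n) ∨ hasBluePath G red n) →
        (2.00365 : ℝ) * n ≤ G.edgeFinset.card := by
  classical
  refine ⟨300, ?_⟩
  intro n hn V _ _ G _ harrow
  by_contra hlt
  push_neg at hlt
  set Bs : Finset V := Finset.univ.filter (fun v => 10 ≤ G.degree v) with hBsdef
  obtain ⟨A, hAmem, hAmax⟩ := Finset.exists_max_image
    (Finset.univ.powerset.filter
      (fun S : Finset V => (∀ a ∈ S, G.degree a ≤ 9) ∧
        ∀ a ∈ S, ∀ b ∈ S, a ≠ b → ¬ G.Adj a b ∧ ∀ u, ¬ (G.Adj u a ∧ G.Adj u b)))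
    (fun S => S.card)
    ⟨∅, by simp⟩
  rw [Finset.mem_filter] at hAmem
  obtain ⟨-, hAlow, hAind⟩ := hAmem
  have hA1nb : ∀ u a b : V, a ∈ A → b ∈ A → G.Adj u a → G.Adj u b → a = b := by
    intro u a b ha hb hua hub
    by_contra hne
    exact (hAind a ha b hb hne).2 u ⟨hua, hub⟩
  have hAmaxP : ∀ w : V, G.degree w ≤ 9 → w ∉ A →
      ∃ a ∈ A, G.Adj w a ∨ ∃ u, G.Adj u w ∧ G.Adj u a := by
    intro w hdeg hw
    by_contra hcon
    push_neg at hcon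
    have hmem : insert w A ∈ (Finset.univ.powerset.filter
        (fun S : Finset V => (∀ a ∈ S, G.degree a ≤ 9) ∧
          ∀ a ∈ S, ∀ b ∈ S, a ≠ b → ¬ G.Adj a b ∧ ∀ u, ¬ (G.Adj u a ∧ G.Adj u b))) := by
      rw [Finset.mem_filter]
      refine ⟨Finset.mem_powerset.2 (Finset.subset_univ _), ?_, ?_⟩
      · intro a ha
        rcases Finset.mem_insert.1 ha with rfl | ha
        · exact hdeg
        · exact hAlow a ha
      · intro a ha b hb hne
        rcases Finset.mem_insert.1 ha with rfl | ha2
        · rcases Finset.mem_insert.1 hb with rfl | hb2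
          · exact absurd rfl hne
          · exact ⟨fun h => (hcon b hb2).1 h, fun u hu => (hcon b hb2).2 u hu.1 hu.2⟩
        · rcases Finset.mem_insert.1 hb with rfl | hb2
          · exact ⟨fun h => (hcon a ha2).1 h.symm, fun u hu => (hcon a ha2).2 u hu.2 hu.1⟩
          · exact hAind a ha2 b hb2 hne
    have := hAmax _ hmem
    rw [Finset.card_insert_of_notMem hw] at this
    omega
  set stars : Finset (Sym2 V) := G.edgeFinset.filter (fun e => ∃ a ∈ A, a ∈ e) with hstarsdef
  set EH : Finset (Sym2 V) :=
    G.edgeFinset.filter (fun e => (∃ a ∈ A, a ∈ e) ∨ ∀ w ∈ e, w ∉ Bs) with hEHdef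
  have hstars_sub : stars ⊆ EH := by
    intro e he
    rw [hstarsdef, Finset.mem_filter] at he
    rw [hEHdef, Finset.mem_filter]
    exact ⟨he.1, Or.inl he.2⟩
  have hstarA : ∀ {w y : V}, (fromEdgeSet (↑stars : Set (Sym2 V))).Adj w y →
      G.Adj w y ∧ (w ∉ A → y ∈ A) := by
    intro w y h
    rw [SimpleGraph.fromEdgeSet_adj] at h
    have hmem : s(w,y) ∈ stars := by exact_mod_cast h.1
    rw [hstarsdef, Finset.mem_filter] at hmem
    obtain ⟨hEdge, a, haA, hae⟩ := hmem
    refine ⟨(SimpleGraph.mem_edgeSet G).1 ((SimpleGraph.mem_edgeFinset).1 hEdge), ?_⟩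
    intro hwA
    rcases Sym2.mem_iff.1 hae with rfl | rfl
    · exact absurd haA hwA
    · exact haA
  have hstars_acyc : (fromEdgeSet (↑stars : Set (Sym2 V))).IsAcyclic := by
    intro u0 cc hcc
    have hsupA : ∀ w ∈ cc.support, w ∈ A := by
      intro w hw
      by_contra hwA
      obtain ⟨y, z, hyz, hy, hz⟩ := SR18.cycle_two_neighbors cc hcc hw
      have hy2 := hstarA hy
      have hz2 := hstarA hz
      exact hyz (hA1nb w y z (hy2.2 hwA) (hz2.2 hwA) hy2.1 hz2.1)
    obtain ⟨b, hadj, q, rfl⟩ := SR18.walk_cons_of_ne_nil cc hcc.ne_nil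
    have hu0A : u0 ∈ A := hsupA u0 (SimpleGraph.Walk.start_mem_support _)
    have hbA : b ∈ A := by
      apply hsupA
      rw [SimpleGraph.Walk.support_cons]
      exact List.mem_cons_of_mem _ q.start_mem_support
    have hGadj : G.Adj u0 b := (hstarA hadj).1
    exact (hAind u0 hu0A b hbA hGadj.ne).1 hGadj
  obtain ⟨R, hRmem, hRmax⟩ := Finset.exists_max_image
    (EH.powerset.filter (fun S => stars ⊆ S ∧
      (fromEdgeSet (↑S : Set (Sym2 V))).IsAcyclic))
    (fun S => S.card)
    ⟨stars, by
      rw [Finset.mem_filter, Finset.mem_powerset]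
      exact ⟨hstars_sub, Finset.Subset.refl _, hstars_acyc⟩⟩
  rw [Finset.mem_filter, Finset.mem_powerset] at hRmem
  obtain ⟨hRsub, hRstars, hRacyc⟩ := hRmem
  have hreach : ∀ x y : V, s(x,y) ∈ EH → x ≠ y →
      (fromEdgeSet (↑R : Set (Sym2 V))).Reachable x y := by
    intro x y hEHm hne
    by_cases hmem : s(x,y) ∈ R
    · exact ((SimpleGraph.fromEdgeSet_adj _).2 ⟨by exact_mod_cast hmem, hne⟩).reachable
    · have hnotacyc : ¬ (fromEdgeSet (↑(insert s(x,y) R) : Set (Sym2 V))).IsAcyclic := by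
        intro hacyc
        have hmem2 : insert s(x,y) R ∈ EH.powerset.filter (fun S => stars ⊆ S ∧
            (fromEdgeSet (↑S : Set (Sym2 V))).IsAcyclic) := by
          rw [Finset.mem_filter, Finset.mem_powerset]
          exact ⟨Finset.insert_subset hEHm hRsub,
            hRstars.trans (Finset.subset_insert _ _), hacyc⟩
        have := hRmax _ hmem2
        rw [Finset.card_insert_of_notMem hmem] at this
        omega
      simp only [SimpleGraph.IsAcyclic, not_forall, not_not] at hnotacyc
      obtain ⟨w0, cc, hcc⟩ := hnotacyc
      by_cases hecc : s(x,y) ∈ cc.edges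
      · have hkey := (SimpleGraph.adj_and_reachable_delete_edges_iff_exists_cycle).2
          ⟨w0, cc, hcc, hecc⟩
        refine SimpleGraph.Reachable.mono ?_ hkey.2
        intro a b hab
        rw [SimpleGraph.deleteEdges_adj] at hab
        obtain ⟨hab1, hab2⟩ := hab
        rw [SimpleGraph.fromEdgeSet_adj] at hab1 ⊢
        refine ⟨?_, hab1.2⟩
        have hab3 : s(a,b) ∈ insert s(x,y) R := by exact_mod_cast hab1.1
        rcases Finset.mem_insert.1 hab3 with heq | h
        · exfalso
          exact hab2 (by simp [heq])
        · exact_mod_cast h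
      · have hsub : ∀ e ∈ cc.edges, e ∈ (fromEdgeSet (↑R : Set (Sym2 V))).edgeSet := by
          intro e he
          have heG2 := cc.edges_subset_edgeSet he
          rw [SimpleGraph.edgeSet_fromEdgeSet] at heG2 ⊢
          refine ⟨?_, heG2.2⟩
          have he3 : e ∈ insert s(x,y) R := by exact_mod_cast heG2.1
          rcases Finset.mem_insert.1 he3 with rfl | h
          · exact absurd he hecc
          · exact_mod_cast h
        exact absurd (hcc.transfer hsub) (hRacyc _)
  rcases harrow (fun e => decide (e ∈ R)) with hred | hblue
  · obtain ⟨w0, cc, hcc, -, hall⟩ := hred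
    have hsub : ∀ e ∈ cc.edges, e ∈ (fromEdgeSet (↑R : Set (Sym2 V))).edgeSet := by
      intro e he
      rw [SimpleGraph.edgeSet_fromEdgeSet]
      constructor
      · have := of_decide_eq_true (hall e he)
        exact_mod_cast this
      · exact SimpleGraph.not_isDiag_of_mem_edgeSet G (cc.edges_subset_edgeSet he)
    exact absurd (hcc.transfer hsub) (hRacyc _)
  obtain ⟨pu, pv, p, hp, hplen, hpblue⟩ := hblue
  have hn300 : (300 : ℕ) ≤ n := hn
  have hplen0 : p.length ≠ 0 := by omega
  have hAvoid : ∀ a ∈ A, a ∉ p.support := by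
    intro a haA hsup
    obtain ⟨e, he, hae⟩ := SR18.exists_incident_edge p hplen0 a hsup
    have heG : e ∈ G.edgeFinset := (SimpleGraph.mem_edgeFinset).2 (p.edges_subset_edgeSet he)
    have heR : e ∈ R := by
      apply hRstars
      rw [hstarsdef, Finset.mem_filter]
      exact ⟨heG, a, haA, hae⟩
    have hb := hpblue e he
    simp [heR] at hb
  set pE : Finset (Sym2 V) := p.edges.toFinset with hpEdef
  have hpEcard : pE.card + 1 = n := by
    rw [hpEdef, List.toFinset_card_of_nodup hp.isTrail.edges_nodup,
      SimpleGraph.Walk.length_edges]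
    exact hplen
  set Tfin : Finset (Sym2 V) :=
    G.edgeFinset.filter (fun e => e ∉ R ∧ e ∉ pE ∧ ∃ w, w ∈ e ∧ w ∈ Bs) with hTdef
  have hREdge : R ⊆ G.edgeFinset := hRsub.trans (Finset.filter_subset _ _)
  have hpEEdge : pE ⊆ G.edgeFinset := by
    intro e he
    exact (SimpleGraph.mem_edgeFinset).2 (p.edges_subset_edgeSet (List.mem_toFinset.1 he))
  have hdisj1 : Disjoint R pE := by
    rw [Finset.disjoint_left]
    intro e heR hepE
    have hb := hpblue e (List.mem_toFinset.1 hepE)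
    simp [heR] at hb
  have hdisj2 : Disjoint (R ∪ pE) Tfin := by
    rw [Finset.disjoint_left]
    intro e heU heT
    rw [hTdef, Finset.mem_filter] at heT
    rcases Finset.mem_union.1 heU with h | h
    · exact heT.2.1 h
    · exact heT.2.2.1 h
  have hcount1 : R.card + pE.card + Tfin.card ≤ G.edgeFinset.card := by
    have hsub2 : R ∪ pE ∪ Tfin ⊆ G.edgeFinset := by
      refine Finset.union_subset (Finset.union_subset hREdge hpEEdge) ?_
      rw [hTdef]
      exact Finset.filter_subset _ _
    calc R.card + pE.card + Tfin.card
        = (R ∪ pE).card + Tfin.card := by rw [Finset.card_union_of_disjoint hdisj1]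
      _ = (R ∪ pE ∪ Tfin).card := (Finset.card_union_of_disjoint hdisj2).symm
      _ ≤ G.edgeFinset.card := Finset.card_le_card hsub2
  have hIncR : ∀ v ∈ Bs, ((G.incidenceFinset v).filter (fun e => e ∈ R)).card ≤ 1 := by
    intro v hv
    rw [Finset.card_le_one]
    have hkey : ∀ e ∈ (G.incidenceFinset v).filter (fun e => e ∈ R),
        ∃ a ∈ A, e = s(v, a) ∧ G.Adj v a := by
      intro e he
      rw [Finset.mem_filter, SimpleGraph.mem_incidenceFinset] at he
      obtain ⟨hinc, heR⟩ := he
      obtain ⟨heE, hve⟩ := hinc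
      have heEH := hRsub heR
      rw [hEHdef, Finset.mem_filter] at heEH
      rcases heEH.2 with ⟨a, haA, hae⟩ | hall
      · have hva : v ≠ a := by
          intro hvaeq
          subst hvaeq
          have h9 := hAlow v haA
          rw [hBsdef, Finset.mem_filter] at hv
          omega
        have heq : e = s(v, a) := (Sym2.mem_and_mem_iff hva).1 ⟨hve, hae⟩
        refine ⟨a, haA, heq, ?_⟩
        rw [heq] at heE
        exact (SimpleGraph.mem_edgeSet G).1 heE
      · exact absurd hv (hall v hve)
    intro e1 he1 e2 he2
    obtain ⟨a1, ha1, heq1, hadj1⟩ := hkey e1 he1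
    obtain ⟨a2, ha2, heq2, hadj2⟩ := hkey e2 he2
    rw [heq1, heq2, hA1nb v a1 a2 ha1 ha2 hadj1 hadj2]
  have hIncP : ∀ v : V, ((G.incidenceFinset v).filter (fun e => e ∈ pE)).card ≤ 2 := by
    intro v
    have hsub3 : (G.incidenceFinset v).filter (fun e => e ∈ pE)
        ⊆ (p.edges.filter (fun e => v ∈ e)).toFinset := by
      intro e he
      rw [Finset.mem_filter, SimpleGraph.mem_incidenceFinset] at he
      rw [List.mem_toFinset, List.mem_filter]
      refine ⟨List.mem_toFinset.1 he.2, by simpa using he.1.2⟩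
    calc ((G.incidenceFinset v).filter (fun e => e ∈ pE)).card
        ≤ (p.edges.filter (fun e => v ∈ e)).toFinset.card := Finset.card_le_card hsub3
      _ ≤ (p.edges.filter (fun e => v ∈ e)).length := List.toFinset_card_le _
      _ ≤ 2 := SR18.path_degree_le_two p hp v
  have hIncSplit : ∀ v ∈ Bs,
      G.degree v ≤ 3 + ((G.incidenceFinset v).filter (fun e => e ∈ Tfin)).card := by
    intro v hv
    have hsub4 : G.incidenceFinset v ⊆
        ((G.incidenceFinset v).filter (fun e => e ∈ R)) ∪
        ((G.incidenceFinset v).filter (fun e => e ∈ pE)) ∪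
        ((G.incidenceFinset v).filter (fun e => e ∈ Tfin)) := by
      intro e he
      have he' := he
      rw [SimpleGraph.mem_incidenceFinset] at he'
      obtain ⟨heE, hve⟩ := he'
      by_cases h1 : e ∈ R
      · exact Finset.mem_union_left _ (Finset.mem_union_left _ (Finset.mem_filter.2 ⟨he, h1⟩))
      by_cases h2 : e ∈ pE
      · exact Finset.mem_union_left _ (Finset.mem_union_right _ (Finset.mem_filter.2 ⟨he, h2⟩))
      refine Finset.mem_union_right _ (Finset.mem_filter.2 ⟨he, ?_⟩)
      rw [hTdef, Finset.mem_filter]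
      exact ⟨(SimpleGraph.mem_edgeFinset).2 heE, h1, h2, v, hve, hv⟩
    calc G.degree v = (G.incidenceFinset v).card :=
          (SimpleGraph.card_incidenceFinset_eq_degree G v).symm
      _ ≤ (((G.incidenceFinset v).filter (fun e => e ∈ R)) ∪
          ((G.incidenceFinset v).filter (fun e => e ∈ pE)) ∪
          ((G.incidenceFinset v).filter (fun e => e ∈ Tfin))).card :=
          Finset.card_le_card hsub4
      _ ≤ (((G.incidenceFinset v).filter (fun e => e ∈ R)) ∪
          ((G.incidenceFinset v).filter (fun e => e ∈ pE))).card +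
          ((G.incidenceFinset v).filter (fun e => e ∈ Tfin)).card := Finset.card_union_le _ _
      _ ≤ ((G.incidenceFinset v).filter (fun e => e ∈ R)).card +
          ((G.incidenceFinset v).filter (fun e => e ∈ pE)).card +
          ((G.incidenceFinset v).filter (fun e => e ∈ Tfin)).card := by
            have := Finset.card_union_le ((G.incidenceFinset v).filter (fun e => e ∈ R))
              ((G.incidenceFinset v).filter (fun e => e ∈ pE))
            omega
      _ ≤ 3 + ((G.incidenceFinset v).filter (fun e => e ∈ Tfin)).card := by
            have h1 := hIncR v hv
            have h2 := hIncP v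
            omega
  have hsumT : ∑ v ∈ Bs, ((G.incidenceFinset v).filter (fun e => e ∈ Tfin)).card
      ≤ 2 * Tfin.card := by
    have hstep : ∀ v : V, ((G.incidenceFinset v).filter (fun e => e ∈ Tfin)).card
        ≤ (Tfin.filter (fun e => v ∈ e)).card := by
      intro v
      apply Finset.card_le_card
      intro e he
      rw [Finset.mem_filter, SimpleGraph.mem_incidenceFinset] at he
      exact Finset.mem_filter.2 ⟨he.2, he.1.2⟩
    calc ∑ v ∈ Bs, ((G.incidenceFinset v).filter (fun e => e ∈ Tfin)).card
        ≤ ∑ v ∈ Bs, (Tfin.filter (fun e => v ∈ e)).card :=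
          Finset.sum_le_sum (fun v _ => hstep v)
      _ ≤ ∑ v ∈ Finset.univ, (Tfin.filter (fun e => v ∈ e)).card :=
          Finset.sum_le_sum_of_subset (Finset.subset_univ _)
      _ = ∑ v ∈ Finset.univ, ∑ e ∈ Tfin, (if v ∈ e then 1 else 0) := by
          refine Finset.sum_congr rfl (fun v _ => ?_)
          exact Finset.card_filter _ _
      _ = ∑ e ∈ Tfin, ∑ v ∈ Finset.univ, (if v ∈ e then 1 else 0) := Finset.sum_comm
      _ = ∑ e ∈ Tfin, (Finset.univ.filter (fun v => v ∈ e)).card := by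
          refine Finset.sum_congr rfl (fun e _ => ?_)
          exact (Finset.card_filter _ _).symm
      _ = ∑ _e ∈ Tfin, 2 := by
          refine Finset.sum_congr rfl (fun e he => ?_)
          have heE : e ∈ G.edgeFinset := by
            rw [hTdef] at he
            exact (Finset.mem_filter.1 he).1
          exact SR18.sym2_card_two
            (SimpleGraph.not_isDiag_of_mem_edgeSet G ((SimpleGraph.mem_edgeFinset).1 heE))
      _ = 2 * Tfin.card := by rw [Finset.sum_const, smul_eq_mul, mul_comm]
  set DB : ℕ := ∑ v ∈ Bs, G.degree v with hDBdef
  have hDB3 : DB ≤ 3 * Bs.card + 2 * Tfin.card := by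
    calc DB ≤ ∑ v ∈ Bs, (3 + ((G.incidenceFinset v).filter (fun e => e ∈ Tfin)).card) :=
          Finset.sum_le_sum (fun v hv => hIncSplit v hv)
      _ = 3 * Bs.card + ∑ v ∈ Bs, ((G.incidenceFinset v).filter (fun e => e ∈ Tfin)).card := by
          rw [Finset.sum_add_distrib, Finset.sum_const, smul_eq_mul, mul_comm]
      _ ≤ 3 * Bs.card + 2 * Tfin.card := by omega
  have h10B : 10 * Bs.card ≤ DB := by
    calc 10 * Bs.card = ∑ _v ∈ Bs, 10 := by rw [Finset.sum_const, smul_eq_mul, mul_comm]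
      _ ≤ DB := Finset.sum_le_sum (fun v hv => by
          rw [hBsdef, Finset.mem_filter] at hv
          exact hv.2)
  obtain ⟨t, hcov, hind, hcnt⟩ := SR18.comps_count (V := V) R
  set F := fromEdgeSet (↑R : Set (Sym2 V)) with hFdef
  have hrepex : ∀ v : V, ∃ w ∈ t, F.Reachable v w := hcov
  set rep : V → V := fun v => (hrepex v).choose with hrepdef
  have hrep1 : ∀ v : V, rep v ∈ t := fun v => (hrepex v).choose_spec.1
  have hrep2 : ∀ v : V, F.Reachable v (rep v) := fun v => (hrepex v).choose_spec.2
  have hrepu : ∀ v w0 : V, w0 ∈ t → F.Reachable v w0 → rep v = w0 := by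
    intro v w0 hw0 hr
    by_contra hne
    exact hind (rep v) (hrep1 v) w0 hw0 hne ((hrep2 v).symm.trans hr)
  have hsame : ∀ ⦃a b : V⦄, G.Adj a b → a ∉ Bs → b ∉ Bs → rep a = rep b := by
    intro a b hab haB hbB
    have hEH2 : s(a,b) ∈ EH := by
      rw [hEHdef, Finset.mem_filter]
      refine ⟨(SimpleGraph.mem_edgeFinset).2 ((SimpleGraph.mem_edgeSet G).2 hab), Or.inr ?_⟩
      intro w hw
      rcases Sym2.mem_iff.1 hw with rfl | rfl
      exacts [haB, hbB]
    exact hrepu a (rep b) (hrep1 b) ((hreach a b hEH2 hab.ne).trans (hrep2 b))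
  have hseg := SR18.seg rep Bs hsame p
  set SP : Finset V := p.support.toFinset with hSPdef
  have hSPn : SP.card = n := by
    rw [hSPdef, List.toFinset_card_of_nodup hp.support_nodup,
      SimpleGraph.Walk.length_support]
    exact hplen
  set P' : Finset V := SP.filter (fun w => w ∉ Bs) with hP'def
  set BP : Finset V := SP.filter (fun w => w ∈ Bs) with hBPdef
  have hP'eq : (p.support.filter (fun w => w ∉ Bs)).toFinset = P' := by
    rw [hP'def, hSPdef, List.toFinset_filter]
    exact Finset.filter_congr (by intro x _; simp)
  have hBPeq : (p.support.filter (fun w => w ∈ Bs)).toFinset = BP := by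
    rw [hBPdef, hSPdef, List.toFinset_filter]
    exact Finset.filter_congr (by intro x _; simp)
  have hBPlen : (p.support.filter (fun w => w ∈ Bs)).length = BP.card := by
    rw [← hBPeq, List.toFinset_card_of_nodup (hp.support_nodup.filter _)]
  have hP'card : P'.card + BP.card = n := by
    rw [← hSPn, hP'def, hBPdef]
    have hcc := Finset.card_filter_add_card_filter_not
      (s := SP) (fun w => w ∈ Bs)
    omega
  have hsegbd : (P'.image rep).card ≤ BP.card + 1 := by
    rw [← hP'eq, ← hBPlen]
    refine le_trans hseg ?_
    split <;> omega
  set tP : Finset V := P'.image rep with htPdef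
  have htPsub : tP ⊆ t := by
    intro w hw
    rw [htPdef, Finset.mem_image] at hw
    obtain ⟨z, _, rfl⟩ := hw
    exact hrep1 z
  set A1fin : Finset V := A.filter (fun a => 0 < G.degree a) with hA1def
  set W : Finset V := P' ∪ A1fin with hWdef
  have hdisjW : Disjoint P' A1fin := by
    rw [Finset.disjoint_left]
    intro x hx hxA
    have hxs : x ∈ p.support := by
      rw [hP'def, Finset.mem_filter, hSPdef] at hx
      exact List.mem_toFinset.1 hx.1
    rw [hA1def, Finset.mem_filter] at hxA
    exact hAvoid x hxA.1 hxs
  have hWcard : W.card = P'.card + A1fin.card := Finset.card_union_of_disjoint hdisjW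
  have hnp : ∀ w0 ∈ t \ tP, ∃ z : V, z ∉ W ∧ rep z = w0 := by
    intro w0 hw0
    rw [Finset.mem_sdiff] at hw0
    obtain ⟨hw0t, hw0n⟩ := hw0
    have hrw0 : rep w0 = w0 := hrepu w0 w0 hw0t (SimpleGraph.Reachable.refl _)
    by_cases hWm : w0 ∈ W
    · rw [hWdef, Finset.mem_union] at hWm
      rcases hWm with hPm | hA1
      · exfalso
        apply hw0n
        rw [htPdef]
        have := Finset.mem_image_of_mem rep hPm
        rwa [hrw0] at this
      · rw [hA1def, Finset.mem_filter] at hA1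
        obtain ⟨haA, hdegpos⟩ := hA1
        obtain ⟨z, hz⟩ := (G.degree_pos_iff_exists_adj w0).1 hdegpos
        have hstar : s(w0, z) ∈ R := by
          apply hRstars
          rw [hstarsdef, Finset.mem_filter]
          exact ⟨(SimpleGraph.mem_edgeFinset).2 ((SimpleGraph.mem_edgeSet G).2 hz),
            w0, haA, by simp⟩
        have hFadj : F.Adj w0 z := by
          rw [hFdef, SimpleGraph.fromEdgeSet_adj]
          exact ⟨by exact_mod_cast hstar, hz.ne⟩
        have hrz : rep z = w0 := hrepu z w0 hw0t hFadj.symm.reachable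
        have hzA : z ∉ A := by
          intro hzA
          exact (hAind w0 haA z hzA hz.ne).1 hz
        have hzP : z ∉ P' := by
          intro hzP
          apply hw0n
          rw [htPdef]
          have := Finset.mem_image_of_mem rep hzP
          rwa [hrz] at this
        refine ⟨z, ?_, hrz⟩
        rw [hWdef, Finset.mem_union]
        rintro (h | h)
        · exact hzP h
        · rw [hA1def, Finset.mem_filter] at h
          exact hzA h.1
    · exact ⟨w0, hWm, hrw0⟩
  have hinj : W.card + (t \ tP).card ≤ Fintype.card V := by
    set hfun : V → V := fun w0 =>
      if hw : ∃ z, z ∉ W ∧ rep z = w0 then hw.choose else w0 with hhdef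
    have himg : ∀ w0 ∈ t \ tP, hfun w0 ∉ W ∧ rep (hfun w0) = w0 := by
      intro w0 hw0
      obtain ⟨z, hz1, hz2⟩ := hnp w0 hw0
      have hex : ∃ z, z ∉ W ∧ rep z = w0 := ⟨z, hz1, hz2⟩
      rw [hhdef]
      simp only [dif_pos hex]
      exact hex.choose_spec
    have himgcard : ((t \ tP).image hfun).card = (t \ tP).card := by
      apply Finset.card_image_of_injOn
      intro a ha b hb hab
      have h1 := (himg a (Finset.mem_coe.1 ha)).2
      have h2 := (himg b (Finset.mem_coe.1 hb)).2
      rw [← h1, hab, h2]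
    have hdisj : Disjoint W ((t \ tP).image hfun) := by
      rw [Finset.disjoint_right]
      intro x hx
      rw [Finset.mem_image] at hx
      obtain ⟨w0, hw0, rfl⟩ := hx
      exact (himg w0 hw0).1
    calc W.card + (t \ tP).card = W.card + ((t \ tP).image hfun).card := by rw [himgcard]
      _ = (W ∪ (t \ tP).image hfun).card := (Finset.card_union_of_disjoint hdisj).symm
      _ ≤ Fintype.card V := by
          rw [← Finset.card_univ]
          exact Finset.card_le_card (Finset.subset_univ _)
  have httP : (t \ tP).card + tP.card = t.card := Finset.card_sdiff_add_card_eq_card htPsub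
  have h2chain : n + A1fin.card ≤ R.card + 2 * BP.card + 1 := by
    have hW2 : W.card + (t \ tP).card ≤ R.card + t.card := le_trans hinj hcnt
    omega
  set NA : Finset V := Finset.univ.filter (fun w => ∃ a ∈ A, G.Adj a w) with hNAdef
  set M : Finset V := Finset.univ.filter
    (fun w => ∃ u0, G.Adj u0 w ∧ ∃ a ∈ A, G.Adj u0 a) with hMdef
  have hcover : SP ⊆ Bs ∪ NA ∪ M := by
    intro w hw
    by_cases hB : w ∈ Bs
    · exact Finset.mem_union_left _ (Finset.mem_union_left _ hB)
    have hdeg : G.degree w ≤ 9 := by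
      rw [hBsdef, Finset.mem_filter] at hB
      push_neg at hB
      have := hB (Finset.mem_univ w)
      omega
    have hwsup : w ∈ p.support := by
      rw [hSPdef] at hw
      exact List.mem_toFinset.1 hw
    have hwA : w ∉ A := fun h => hAvoid w h hwsup
    obtain ⟨a, haA, hor⟩ := hAmaxP w hdeg hwA
    rcases hor with hadj | ⟨u0, h1, h2⟩
    · refine Finset.mem_union_left _ (Finset.mem_union_right _ ?_)
      rw [hNAdef, Finset.mem_filter]
      exact ⟨Finset.mem_univ w, a, haA, hadj.symm⟩
    · refine Finset.mem_union_right _ ?_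
      rw [hMdef, Finset.mem_filter]
      exact ⟨Finset.mem_univ w, u0, h1, a, haA, h2⟩
  have hcov_n : n ≤ Bs.card + NA.card + M.card := by
    calc n = SP.card := hSPn.symm
      _ ≤ (Bs ∪ NA ∪ M).card := Finset.card_le_card hcover
      _ ≤ (Bs ∪ NA).card + M.card := Finset.card_union_le _ _
      _ ≤ Bs.card + NA.card + M.card := by
          have := Finset.card_union_le Bs NA
          omega
  set S : ℕ := ∑ a ∈ A, G.degree a with hSdef
  have hNAS : NA.card ≤ S := by
    have hsub5 : NA ⊆ A.biUnion (fun a => G.neighborFinset a) := by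
      intro w hw
      rw [hNAdef, Finset.mem_filter] at hw
      obtain ⟨-, a, haA, hadj⟩ := hw
      exact Finset.mem_biUnion.2 ⟨a, haA, (SimpleGraph.mem_neighborFinset G a w).2 hadj⟩
    calc NA.card ≤ (A.biUnion (fun a => G.neighborFinset a)).card := Finset.card_le_card hsub5
      _ ≤ ∑ a ∈ A, (G.neighborFinset a).card := Finset.card_biUnion_le
      _ = S := by
          rw [hSdef]
          exact Finset.sum_congr rfl (fun a _ => SimpleGraph.card_neighborFinset_eq_degree G a)
  have hMS : M.card ≤ ∑ u0 ∈ NA, G.degree u0 := by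
    have hsub6 : M ⊆ NA.biUnion (fun u0 => G.neighborFinset u0) := by
      intro w hw
      rw [hMdef, Finset.mem_filter] at hw
      obtain ⟨-, u0, h1, a, haA, h2⟩ := hw
      refine Finset.mem_biUnion.2 ⟨u0, ?_, (SimpleGraph.mem_neighborFinset G u0 w).2 h1⟩
      rw [hNAdef, Finset.mem_filter]
      exact ⟨Finset.mem_univ u0, a, haA, h2.symm⟩
    calc M.card ≤ (NA.biUnion (fun u0 => G.neighborFinset u0)).card :=
          Finset.card_le_card hsub6
      _ ≤ ∑ u0 ∈ NA, (G.neighborFinset u0).card := Finset.card_biUnion_le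
      _ = ∑ u0 ∈ NA, G.degree u0 := Finset.sum_congr rfl (fun a _ =>
          SimpleGraph.card_neighborFinset_eq_degree G a)
  have hNAsum : ∑ u0 ∈ NA, G.degree u0 ≤ 9 * NA.card + DB := by
    have hsplit := Finset.sum_filter_add_sum_filter_not NA (fun w => w ∈ Bs)
      (fun w => G.degree w)
    have hs1 : ∑ u0 ∈ NA.filter (fun w => w ∈ Bs), G.degree u0 ≤ DB := by
      rw [hDBdef]
      refine Finset.sum_le_sum_of_subset ?_
      intro w hw
      exact (Finset.mem_filter.1 hw).2
    have hs2 : ∑ u0 ∈ NA.filter (fun w => ¬ w ∈ Bs), G.degree u0 ≤ 9 * NA.card := by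
      calc ∑ u0 ∈ NA.filter (fun w => ¬ w ∈ Bs), G.degree u0
          ≤ ∑ _u0 ∈ NA.filter (fun w => ¬ w ∈ Bs), 9 := by
            refine Finset.sum_le_sum (fun w hw => ?_)
            have hwB := (Finset.mem_filter.1 hw).2
            rw [hBsdef, Finset.mem_filter] at hwB
            push_neg at hwB
            have := hwB (Finset.mem_univ w)
            omega
        _ = 9 * (NA.filter (fun w => ¬ w ∈ Bs)).card := by
            rw [Finset.sum_const, smul_eq_mul, mul_comm]
        _ ≤ 9 * NA.card := by
            have := Finset.card_filter_le NA (fun w => ¬ w ∈ Bs)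
            omega
    omega
  have hcovfin : n ≤ Bs.card + 10 * S + DB := by
    have h1 : M.card ≤ 9 * S + DB := by
      calc M.card ≤ ∑ u0 ∈ NA, G.degree u0 := hMS
        _ ≤ 9 * NA.card + DB := hNAsum
        _ ≤ 9 * S + DB := by
            have := hNAS
            omega
    omega
  have hS9 : S ≤ 9 * A1fin.card := by
    have hfil : ∑ a ∈ A.filter (fun a => 0 < G.degree a), G.degree a = ∑ a ∈ A, G.degree a :=
      Finset.sum_filter_of_ne (fun x _ hx => Nat.pos_of_ne_zero hx)
    rw [hSdef, ← hfil]
    calc ∑ a ∈ A.filter (fun a => 0 < G.degree a), G.degree a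
        ≤ ∑ _a ∈ A.filter (fun a => 0 < G.degree a), 9 :=
          Finset.sum_le_sum (fun a ha => hAlow a (Finset.mem_filter.1 ha).1)
      _ = 9 * (A.filter (fun a => 0 < G.degree a)).card := by
          rw [Finset.sum_const, smul_eq_mul, mul_comm]
      _ = 9 * A1fin.card := by rw [hA1def]
  have hBPle : BP.card ≤ Bs.card := by
    apply Finset.card_le_card
    intro w hw
    rw [hBPdef, Finset.mem_filter] at hw
    exact hw.2
  -- final arithmetic
  have c1 : ((R.card : ℝ)) + pE.card + Tfin.card ≤ (G.edgeFinset.card : ℝ) := by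
    exact_mod_cast hcount1
  have c2 : (pE.card : ℝ) + 1 = n := by exact_mod_cast hpEcard
  have c3 : (n : ℝ) + A1fin.card ≤ R.card + 2 * BP.card + 1 := by exact_mod_cast h2chain
  have c4 : (DB : ℝ) ≤ 3 * Bs.card + 2 * Tfin.card := by exact_mod_cast hDB3
  have c5 : 10 * (Bs.card : ℝ) ≤ DB := by exact_mod_cast h10B
  have c6 : (n : ℝ) ≤ Bs.card + 10 * S + DB := by exact_mod_cast hcovfin
  have c7 : (S : ℝ) ≤ 9 * A1fin.card := by exact_mod_cast hS9
  have c8 : (BP.card : ℝ) ≤ Bs.card := by exact_mod_cast hBPle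
  have c9 : (300 : ℝ) ≤ n := by exact_mod_cast hn300
  linarith
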